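/- Let p, q₁, q₂ be distributions over [n], let α ∈ [0,1], let s > 0, and let q_α = (1−α)q₁ + αq₂. On some probability space, let (X_i)_{i∈[n]}, (Y_i)_{i∈[n]}, (Z_i)_{i∈[n]} be mutually independent random variables with X_i ∼ Poisson(s·p(i)), Y_i ∼ Poisson(s·q₁(i)), Z_i ∼ Poisson(s·q₂(i)), and define f := ∑_{i=1}^n (X_i − (1−α)Y_i − αZ_i)² − X_i − (1−α)²Y_i − α²Z_i. Then E[f] = s²·‖p − q_α‖₂², and for any b ≥ max(‖p‖₂², ‖q_α‖₂²), Var(f) ≤ 8 s³ √b · ‖p − q_α‖₄² + 8 s² b. -/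

import Mathlib

open Finset MeasureTheory ProbabilityTheory

/-- A distribution over `[n]`: nonnegative values summing to 1. -/
def IsDist {n : ℕ} (p : Fin n → ℝ) : Prop :=
  (∀ i, 0 ≤ p i) ∧ ∑ i, p i = 1

namespace Stmt9Aux

open Real
open scoped NNReal ENNReal

lemma descFactorial_cast (n k : ℕ) :
    (n.descFactorial k : ℝ) = ∏ j ∈ Finset.range k, ((n : ℝ) - j) := by
  induction k with
  | zero => simp
  | succ k ih =>
    rw [Nat.descFactorial_succ, Finset.prod_range_succ, ← ih]
    rcases le_or_gt k n with h | h
    · push_cast [h]; ring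
    · rw [Nat.descFactorial_of_lt h, Nat.sub_eq_zero_of_le h.le]
      simp

lemma pmf_shift (r : ℝ≥0) (k m : ℕ) :
    ((m + k).descFactorial k : ℝ) * poissonPMFReal r (m + k)
      = (r : ℝ) ^ k * poissonPMFReal r m := by
  have hfac : (Nat.factorial m : ℝ) * ((m + k).descFactorial k : ℝ) = (Nat.factorial (m+k) : ℝ) := by
    rw [← Nat.cast_mul]
    norm_cast
    simpa using Nat.factorial_mul_descFactorial (k := k) (n := m + k) (Nat.le_add_left k m)
  unfold poissonPMFReal
  have h1 : (Nat.factorial m : ℝ) ≠ 0 := by positivity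
  have h2 : (Nat.factorial (m+k) : ℝ) ≠ 0 := by positivity
  field_simp
  rw [pow_add, ← hfac]
  ring

lemma summable_desc_pmf (r : ℝ≥0) (k : ℕ) :
    Summable (fun n => (n.descFactorial k : ℝ) * poissonPMFReal r n) ∧
    ∑' n, (n.descFactorial k : ℝ) * poissonPMFReal r n = (r : ℝ) ^ k := by
  set g : ℕ → ℝ := fun n => (n.descFactorial k : ℝ) * poissonPMFReal r n with hg
  have hinj : Function.Injective (fun m : ℕ => m + k) := fun a b h => by
    simpa using h
  have hvan : ∀ x ∉ Set.range (fun m : ℕ => m + k), g x = 0 := by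
    intro x hx
    have hxk : x < k := by
      by_contra h
      exact hx ⟨x - k, by simp; omega⟩
    simp [hg, Nat.descFactorial_of_lt hxk]
  have hcomp : (g ∘ fun m : ℕ => m + k) = fun m => (r : ℝ) ^ k * poissonPMFReal r m := by
    funext m; simp only [Function.comp_apply, hg]; exact pmf_shift r k m
  have hsum1 : Summable (fun m => (r : ℝ) ^ k * poissonPMFReal r m) :=
    ((poissonPMFRealSum r).summable).mul_left _
  have hs : Summable g := (hinj.summable_iff hvan).mp (by rw [hcomp]; exact hsum1)
  have hsupp : Function.support g ⊆ Set.range (fun m : ℕ => m + k) := by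
    intro x hx
    by_contra h
    exact hx (hvan x h)
  refine ⟨hs, ?_⟩
  have heq := hinj.tsum_eq (f := g) hsupp
  rw [← heq, ← Function.comp_def g (fun m : ℕ => m + k), hcomp, tsum_mul_left,
    (show HasSum (poissonPMFReal r) 1 from poissonPMFRealSum r).tsum_eq, mul_one]


/-- Raw moments of a Poisson random variable with rate `R`, for `k ≤ 4`. -/
noncomputable def pm (R : ℝ) : ℕ → ℝ
  | 0 => 1
  | 1 => R
  | 2 => R ^ 2 + R
  | 3 => R ^ 3 + 3 * R ^ 2 + R
  | 4 => R ^ 4 + 6 * R ^ 3 + 7 * R ^ 2 + R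
  | _ => 0

lemma sum_tsum_pm (r : ℝ≥0) (k : ℕ) (hk : k ≤ 4) :
    Summable (fun n : ℕ => (n : ℝ) ^ k * poissonPMFReal r n) ∧
    ∑' n : ℕ, (n : ℝ) ^ k * poissonPMFReal r n = pm (r : ℝ) k := by
  obtain ⟨S0, T0⟩ := summable_desc_pmf r 0
  obtain ⟨S1, T1⟩ := summable_desc_pmf r 1
  obtain ⟨S2, T2⟩ := summable_desc_pmf r 2
  obtain ⟨S3, T3⟩ := summable_desc_pmf r 3
  obtain ⟨S4, T4⟩ := summable_desc_pmf r 4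
  interval_cases k
  · refine ⟨by simpa using S0, ?_⟩
    have := T0
    simp only [Nat.descFactorial_zero, Nat.cast_one, one_mul] at this
    simpa [pm] using this
  · have e : (fun n : ℕ => (n : ℝ) ^ 1 * poissonPMFReal r n)
        = fun n => (n.descFactorial 1 : ℝ) * poissonPMFReal r n := by
      funext n; simp [descFactorial_cast, Finset.prod_range_succ]
    rw [e]
    exact ⟨S1, by rw [T1]; simp [pm]⟩
  · have e : (fun n : ℕ => (n : ℝ) ^ 2 * poissonPMFReal r n)
        = fun n => (n.descFactorial 2 : ℝ) * poissonPMFReal r n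
            + (n.descFactorial 1 : ℝ) * poissonPMFReal r n := by
      funext n; simp only [descFactorial_cast, Finset.prod_range_succ, Finset.prod_range_zero]
      push_cast; ring
    rw [e]
    refine ⟨S2.add S1, ?_⟩
    rw [Summable.tsum_add S2 S1, T2, T1]; simp [pm]
  · have e : (fun n : ℕ => (n : ℝ) ^ 3 * poissonPMFReal r n)
        = fun n => (n.descFactorial 3 : ℝ) * poissonPMFReal r n
            + (3 * ((n.descFactorial 2 : ℝ) * poissonPMFReal r n)
              + (n.descFactorial 1 : ℝ) * poissonPMFReal r n) := by
      funext n; simp only [descFactorial_cast, Finset.prod_range_succ, Finset.prod_range_zero]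
      push_cast; ring
    rw [e]
    refine ⟨S3.add ((S2.mul_left 3).add S1), ?_⟩
    rw [Summable.tsum_add S3 ((S2.mul_left 3).add S1), Summable.tsum_add (S2.mul_left 3) S1, tsum_mul_left,
      T3, T2, T1]
    simp [pm]; ring
  · have e : (fun n : ℕ => (n : ℝ) ^ 4 * poissonPMFReal r n)
        = fun n => (n.descFactorial 4 : ℝ) * poissonPMFReal r n
            + (6 * ((n.descFactorial 3 : ℝ) * poissonPMFReal r n)
              + (7 * ((n.descFactorial 2 : ℝ) * poissonPMFReal r n)
                + (n.descFactorial 1 : ℝ) * poissonPMFReal r n)) := by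
      funext n; simp only [descFactorial_cast, Finset.prod_range_succ, Finset.prod_range_zero]
      push_cast; ring
    rw [e]
    refine ⟨S4.add ((S3.mul_left 6).add ((S2.mul_left 7).add S1)), ?_⟩
    rw [Summable.tsum_add S4 ((S3.mul_left 6).add ((S2.mul_left 7).add S1)),
      Summable.tsum_add (S3.mul_left 6) ((S2.mul_left 7).add S1),
      Summable.tsum_add (S2.mul_left 7) S1, tsum_mul_left, tsum_mul_left, T4, T3, T2, T1]
    simp [pm]; ring

lemma integrable_poisson_of_summable (r : ℝ≥0) {f : ℕ → ℝ}
    (h : Summable (fun n => |f n| * poissonPMFReal r n)) :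
    Integrable f (poissonMeasure r) := by
  rw [integrable_poissonMeasure_iff]
  refine h.congr (fun n => ?_)
  rw [Real.norm_eq_abs, mul_comm (|f n|)]
  rfl

lemma integral_poisson_eq_tsum (r : ℝ≥0) {f : ℕ → ℝ} (hf : Integrable f (poissonMeasure r)) :
    ∫ n, f n ∂(poissonMeasure r) = ∑' n : ℕ, f n * poissonPMFReal r n := by
  rw [integral_poissonMeasure' hf]
  congr 1
  funext n
  rw [smul_eq_mul, mul_comm]
  rfl

lemma poisson_moment (r : ℝ≥0) (k : ℕ) (hk : k ≤ 4) :
    Integrable (fun n : ℕ => (n : ℝ) ^ k) (poissonMeasure r) ∧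
    ∫ n : ℕ, (n : ℝ) ^ k ∂(poissonMeasure r) = pm (r : ℝ) k := by
  obtain ⟨hs, ht⟩ := sum_tsum_pm r k hk
  have hint : Integrable (fun n : ℕ => (n : ℝ) ^ k) (poissonMeasure r) := by
    apply integrable_poisson_of_summable
    have : (fun n : ℕ => |(n : ℝ) ^ k| * poissonPMFReal r n)
        = fun n : ℕ => (n : ℝ) ^ k * poissonPMFReal r n := by
      funext n; rw [abs_of_nonneg (by positivity)]
    rw [this]; exact hs
  refine ⟨hint, ?_⟩
  rw [integral_poisson_eq_tsum r hint, ht]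


variable {Ω : Type*} [MeasurableSpace Ω] {μ : Measure Ω}

lemma mono_moment (U : Ω → ℕ) (A : ℝ) (hA : 0 ≤ A) (hU : Measurable U)
    (hmap : μ.map U = poissonMeasure A.toNNReal) (k : ℕ) (hk : k ≤ 4) :
    Integrable (fun ω => (U ω : ℝ) ^ k) μ ∧ ∫ ω, (U ω : ℝ) ^ k ∂μ = pm A k := by
  obtain ⟨hint, hval⟩ := poisson_moment A.toNNReal k hk
  rw [← hmap] at hint hval
  have hmeas : AEStronglyMeasurable (fun n : ℕ => (n : ℝ) ^ k) (μ.map U) :=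
    (measurable_from_nat (f := fun n : ℕ => (n : ℝ) ^ k)).aestronglyMeasurable
  have h1 : Integrable (fun ω => (U ω : ℝ) ^ k) μ :=
    (integrable_map_measure hmeas hU.aemeasurable).mp hint
  refine ⟨h1, ?_⟩
  rw [integral_map hU.aemeasurable hmeas] at hval
  rw [← Real.coe_toNNReal A hA]
  exact hval

lemma joint_moment (U V T : Ω → ℕ) (A B C : ℝ) (hA : 0 ≤ A) (hB : 0 ≤ B) (hC : 0 ≤ C)
    (hUm : Measurable U) (hVm : Measurable V) (hTm : Measurable T)
    (hUmap : μ.map U = poissonMeasure A.toNNReal)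
    (hVmap : μ.map V = poissonMeasure B.toNNReal)
    (hTmap : μ.map T = poissonMeasure C.toNNReal)
    (hUV : IndepFun U V μ) (hUVT : IndepFun (fun ω => (U ω, V ω)) T μ)
    (a b c : ℕ) (ha : a ≤ 4) (hb : b ≤ 4) (hc : c ≤ 4) :
    Integrable (fun ω => (U ω : ℝ) ^ a * (V ω : ℝ) ^ b * (T ω : ℝ) ^ c) μ ∧
    ∫ ω, (U ω : ℝ) ^ a * (V ω : ℝ) ^ b * (T ω : ℝ) ^ c ∂μ = pm A a * pm B b * pm C c := by
  obtain ⟨hUi, hUv⟩ := mono_moment U A hA hUm hUmap a ha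
  obtain ⟨hVi, hVv⟩ := mono_moment V B hB hVm hVmap b hb
  obtain ⟨hTi, hTv⟩ := mono_moment T C hC hTm hTmap c hc
  have hφ : Measurable (fun n : ℕ => (n : ℝ) ^ a) := measurable_from_nat
  have hψ : Measurable (fun n : ℕ => (n : ℝ) ^ b) := measurable_from_nat
  have hχ : Measurable (fun n : ℕ => (n : ℝ) ^ c) := measurable_from_nat
  have hUVpow : IndepFun (fun ω => (U ω : ℝ) ^ a) (fun ω => (V ω : ℝ) ^ b) μ :=
    hUV.comp hφ hψ
  have hpairpow : IndepFun (fun ω => (U ω : ℝ) ^ a * (V ω : ℝ) ^ b)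
      (fun ω => (T ω : ℝ) ^ c) μ := by
    have hm : Measurable (fun q : ℕ × ℕ => (q.1 : ℝ) ^ a * (q.2 : ℝ) ^ b) :=
      measurable_of_countable _
    exact hUVT.comp hm hχ
  have hInt2 : Integrable (fun ω => (U ω : ℝ) ^ a * (V ω : ℝ) ^ b) μ := by
    have := hUVpow.integrable_mul hUi hVi
    exact this
  have hVal2 : ∫ ω, (U ω : ℝ) ^ a * (V ω : ℝ) ^ b ∂μ = pm A a * pm B b := by
    have := hUVpow.integral_mul_eq_mul_integral hUi.aestronglyMeasurable hVi.aestronglyMeasurable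
    rw [← hUv, ← hVv]
    exact this
  have hInt3 : Integrable (fun ω => (U ω : ℝ) ^ a * (V ω : ℝ) ^ b * (T ω : ℝ) ^ c) μ := by
    have := hpairpow.integrable_mul hInt2 hTi
    exact this
  have hVal3 := hpairpow.integral_mul_eq_mul_integral hInt2.aestronglyMeasurable hTi.aestronglyMeasurable
  refine ⟨hInt3, ?_⟩
  rw [show (∫ ω, (U ω : ℝ) ^ a * (V ω : ℝ) ^ b * (T ω : ℝ) ^ c ∂μ)
      = ∫ ω, ((fun ω => (U ω : ℝ) ^ a * (V ω : ℝ) ^ b) * fun ω => (T ω : ℝ) ^ c) ω ∂μ from rfl]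
  rw [hVal3, hVal2, hTv]


lemma poly_int {N : ℕ} (U V T : Ω → ℕ) (A B C : ℝ)
    (coef : Fin N → ℝ) (e : Fin N → ℕ × ℕ × ℕ)
    (he : ∀ j, (e j).1 ≤ 4 ∧ (e j).2.1 ≤ 4 ∧ (e j).2.2 ≤ 4)
    (hkey : ∀ a b c : ℕ, a ≤ 4 → b ≤ 4 → c ≤ 4 →
      Integrable (fun ω => (U ω : ℝ) ^ a * (V ω : ℝ) ^ b * (T ω : ℝ) ^ c) μ ∧
      ∫ ω, (U ω : ℝ) ^ a * (V ω : ℝ) ^ b * (T ω : ℝ) ^ c ∂μ = pm A a * pm B b * pm C c)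
    (g : Ω → ℝ)
    (hg : ∀ ω, g ω = ∑ j, coef j *
      ((U ω : ℝ) ^ (e j).1 * (V ω : ℝ) ^ (e j).2.1 * (T ω : ℝ) ^ (e j).2.2)) :
    Integrable g μ ∧
    ∫ ω, g ω ∂μ = ∑ j, coef j * (pm A (e j).1 * pm B (e j).2.1 * pm C (e j).2.2) := by
  have hmono : ∀ j : Fin N, Integrable
      (fun ω => (U ω : ℝ) ^ (e j).1 * (V ω : ℝ) ^ (e j).2.1 * (T ω : ℝ) ^ (e j).2.2) μ :=
    fun j => (hkey _ _ _ (he j).1 (he j).2.1 (he j).2.2).1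
  have hg' : g = fun ω => ∑ j, coef j *
      ((U ω : ℝ) ^ (e j).1 * (V ω : ℝ) ^ (e j).2.1 * (T ω : ℝ) ^ (e j).2.2) := funext hg
  constructor
  · rw [hg']
    exact integrable_finset_sum _ (fun j _ => (hmono j).const_mul _)
  · rw [hg', integral_finset_sum _ (fun j _ => (hmono j).const_mul _)]
    refine Finset.sum_congr rfl (fun j _ => ?_)
    rw [integral_const_mul]
    rw [(hkey _ _ _ (he j).1 (he j).2.1 (he j).2.2).2]


lemma per_i [IsProbabilityMeasure μ] (U V T : Ω → ℕ) (A B C α : ℝ) (hA : 0 ≤ A) (hB : 0 ≤ B) (hC : 0 ≤ C)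
    (hUm : Measurable U) (hVm : Measurable V) (hTm : Measurable T)
    (hUmap : μ.map U = poissonMeasure A.toNNReal)
    (hVmap : μ.map V = poissonMeasure B.toNNReal)
    (hTmap : μ.map T = poissonMeasure C.toNNReal)
    (hUV : IndepFun U V μ) (hUVT : IndepFun (fun ω => (U ω, V ω)) T μ)
    (g : Ω → ℝ)
    (hg : ∀ ω, g ω = ((U ω : ℝ) - (1 - α) * V ω - α * T ω) ^ 2
      - U ω - (1 - α) ^ 2 * V ω - α ^ 2 * T ω) :
    MemLp g 2 μ ∧
    ∫ ω, g ω ∂μ = (A - (1 - α) * B - α * C) ^ 2 ∧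
    variance g μ = 4 * (A - (1 - α) * B - α * C) ^ 2 * (A + (1 - α) ^ 2 * B + α ^ 2 * C)
      + 2 * (A + (1 - α) ^ 2 * B + α ^ 2 * C) ^ 2 := by
  have hkey := joint_moment U V T A B C hA hB hC hUm hVm hTm hUmap hVmap hTmap hUV hUVT
  have hkey' : ∀ a b c : ℕ, a ≤ 4 → b ≤ 4 → c ≤ 4 →
      Integrable (fun ω => (U ω : ℝ) ^ a * (V ω : ℝ) ^ b * (T ω : ℝ) ^ c) μ ∧
      ∫ ω, (U ω : ℝ) ^ a * (V ω : ℝ) ^ b * (T ω : ℝ) ^ c ∂μ = pm A a * pm B b * pm C c :=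
    fun a b c ha hb hc => hkey a b c ha hb hc
  -- expansion of g
  set c1 : Fin 9 → ℝ := ![((-1 : ℝ) * α ^ 2), ((1 : ℝ) * α ^ 2), ((-1 : ℝ) + (2 : ℝ) * α + (-1 : ℝ) * α ^ 2), ((2 : ℝ) * α + (-2 : ℝ) * α ^ 2), ((1 : ℝ) + (-2 : ℝ) * α + (1 : ℝ) * α ^ 2), ((-1 : ℝ)), ((-2 : ℝ) * α), ((-2 : ℝ) + (2 : ℝ) * α), ((1 : ℝ))] with hc1
  set e1 : Fin 9 → ℕ × ℕ × ℕ := ![(0, 0, 1), (0, 0, 2), (0, 1, 0), (0, 1, 1), (0, 2, 0), (1, 0, 0), (1, 0, 1), (1, 1, 0), (2, 0, 0)] with he1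
  have hgexp : ∀ ω, g ω = ∑ j, c1 j *
      ((U ω : ℝ) ^ (e1 j).1 * (V ω : ℝ) ^ (e1 j).2.1 * (T ω : ℝ) ^ (e1 j).2.2) := by
    intro ω
    rw [hg ω]
    simp only [hc1, he1, Fin.sum_univ_succ, Fin.sum_univ_zero, Matrix.cons_val_zero,
      Matrix.cons_val_succ]
    ring
  have hE1 := poly_int U V T A B C c1 e1 (by decide) hkey' g hgexp
  have hEg : ∫ ω, g ω ∂μ = (A - (1 - α) * B - α * C) ^ 2 := by
    rw [hE1.2]
    simp only [hc1, he1, Fin.sum_univ_succ, Fin.sum_univ_zero, Matrix.cons_val_zero,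
      Matrix.cons_val_succ]
    simp only [pm]
    ring
  -- expansion of g ^ 2
  set c2 : Fin 30 → ℝ := ![((1 : ℝ) * α ^ 4), ((-2 : ℝ) * α ^ 4), ((1 : ℝ) * α ^ 4), ((2 : ℝ) * α ^ 2 + (-4 : ℝ) * α ^ 3 + (2 : ℝ) * α ^ 4), ((-2 : ℝ) * α ^ 2 + (2 : ℝ) * α ^ 4), ((4 : ℝ) * α ^ 3 + (-4 : ℝ) * α ^ 4), ((1 : ℝ) + (-4 : ℝ) * α + (6 : ℝ) * α ^ 2 + (-4 : ℝ) * α ^ 3 + (1 : ℝ) * α ^ 4), ((-4 : ℝ) * α + (10 : ℝ) * α ^ 2 + (-8 : ℝ) * α ^ 3 + (2 : ℝ) * α ^ 4), ((6 : ℝ) * α ^ 2 + (-12 : ℝ) * α ^ 3 + (6 : ℝ) * α ^ 4), ((-2 : ℝ) + (8 : ℝ) * α + (-12 : ℝ) * α ^ 2 + (8 : ℝ) * α ^ 3 + (-2 : ℝ) * α ^ 4), ((4 : ℝ) * α + (-12 : ℝ) * α ^ 2 + (12 : ℝ) * α ^ 3 + (-4 : ℝ) * α ^ 4), ((1 : ℝ)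 + (-4 : ℝ) * α + (6 : ℝ) * α ^ 2 + (-4 : ℝ) * α ^ 3 + (1 : ℝ) * α ^ 4), ((2 : ℝ) * α ^ 2), ((-2 : ℝ) * α ^ 2 + (4 : ℝ) * α ^ 3), ((-4 : ℝ) * α ^ 3), ((2 : ℝ) + (-4 : ℝ) * α + (2 : ℝ) * α ^ 2), ((-12 : ℝ) * α ^ 2 + (12 : ℝ) * α ^ 3), ((2 : ℝ) + (-8 : ℝ) * α + (10 : ℝ) * α ^ 2 + (-4 : ℝ) * α ^ 3), ((-12 : ℝ) * α + (24 : ℝ) * α ^ 2 + (-12 : ℝ) * α ^ 3), ((-4 : ℝ) + (12 : ℝ) * α + (-12 : ℝ) * α ^ 2 + (4 : ℝ) * α ^ 3), ((1 : ℝ)), ((4 : ℝ) * α + (-2 : ℝ) * α ^ 2), ((6 : ℝ) * α ^ 2), ((2 : ℝ) + (-2 : ℝ) * α ^ 2), ((12 : ℝ) * α + (-12 : ℝ) * α ^ 2), ((6 : ℝ) + (-12 : ℝ) * α + (6 : ℝ) * α ^ 2), ((-2 : ℝ)), ((-4 : ℝ) * α), ((-4 : ℝ) + (4 : ℝ) *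 α), ((1 : ℝ))] with hc2
  set e2 : Fin 30 → ℕ × ℕ × ℕ := ![(0, 0, 2), (0, 0, 3), (0, 0, 4), (0, 1, 1), (0, 1, 2), (0, 1, 3), (0, 2, 0), (0, 2, 1), (0, 2, 2), (0, 3, 0), (0, 3, 1), (0, 4, 0), (1, 0, 1), (1, 0, 2), (1, 0, 3), (1, 1, 0), (1, 1, 2), (1, 2, 0), (1, 2, 1), (1, 3, 0), (2, 0, 0), (2, 0, 1), (2, 0, 2), (2, 1, 0), (2, 1, 1), (2, 2, 0), (3, 0, 0), (3, 0, 1), (3, 1, 0), (4, 0, 0)] with he2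
  have hg2exp : ∀ ω, g ω ^ 2 = ∑ j, c2 j *
      ((U ω : ℝ) ^ (e2 j).1 * (V ω : ℝ) ^ (e2 j).2.1 * (T ω : ℝ) ^ (e2 j).2.2) := by
    intro ω
    rw [hg ω]
    simp only [hc2, he2, Fin.sum_univ_succ, Fin.sum_univ_zero, Matrix.cons_val_zero,
      Matrix.cons_val_succ]
    ring
  have hE2 := poly_int U V T A B C c2 e2 (by decide) hkey' (fun ω => g ω ^ 2) hg2exp
  have hEg2 : ∫ ω, g ω ^ 2 ∂μ
      = (A - (1 - α) * B - α * C) ^ 4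
        + 4 * (A - (1 - α) * B - α * C) ^ 2 * (A + (1 - α) ^ 2 * B + α ^ 2 * C)
        + 2 * (A + (1 - α) ^ 2 * B + α ^ 2 * C) ^ 2 := by
    rw [hE2.2]
    simp only [hc2, he2, Fin.sum_univ_succ, Fin.sum_univ_zero, Matrix.cons_val_zero,
      Matrix.cons_val_succ]
    simp only [pm]
    ring
  have hgm : Measurable g := by
    have hfun : g = (fun q : ℕ × ℕ × ℕ => ((q.1 : ℝ) - (1 - α) * q.2.1 - α * q.2.2) ^ 2
        - q.1 - (1 - α) ^ 2 * q.2.1 - α ^ 2 * q.2.2) ∘ (fun ω => (U ω, V ω, T ω)) :=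
      funext fun ω => hg ω
    rw [hfun]
    exact (measurable_of_countable _).comp (hUm.prodMk (hVm.prodMk hTm))
  have hmem : MemLp g 2 μ :=
    (memLp_two_iff_integrable_sq hgm.aestronglyMeasurable).mpr hE2.1
  refine ⟨hmem, hEg, ?_⟩
  rw [variance_eq_sub hmem]
  have : μ[g ^ 2] = ∫ ω, g ω ^ 2 ∂μ := rfl
  rw [this, hEg2, hEg]
  ring


end Stmt9Aux

open Stmt9Aux

/-- With mutually independent `X_i ∼ Poi(s·p(i))`, `Y_i ∼ Poi(s·q₁(i))`,
`Z_i ∼ Poi(s·q₂(i))` and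
`f = ∑ᵢ (Xᵢ − (1−α)Yᵢ − αZᵢ)² − Xᵢ − (1−α)²Yᵢ − α²Zᵢ`, one has
`E[f] = s²‖p − q_α‖₂²` and, for `b ≥ max(‖p‖₂², ‖q_α‖₂²)`,
`Var(f) ≤ 8s³√b·‖p − q_α‖₄² + 8s²b`. -/
theorem stmt9 {n : ℕ} (p q₁ q₂ qα : Fin n → ℝ)
    (hp : IsDist p) (hq₁ : IsDist q₁) (hq₂ : IsDist q₂)
    (α : ℝ) (hα0 : 0 ≤ α) (hα1 : α ≤ 1)
    (hqα : ∀ i, qα i = (1 - α) * q₁ i + α * q₂ i)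
    (s : ℝ) (hs : 0 < s)
    {Ω : Type*} [MeasurableSpace Ω] (μ : Measure Ω) [IsProbabilityMeasure μ]
    (X Y Z : Fin n → Ω → ℕ)
    (W : Fin 3 × Fin n → Ω → ℕ)
    (hWmeas : ∀ k, Measurable (W k))
    (hW : ∀ i, W (0, i) = X i ∧ W (1, i) = Y i ∧ W (2, i) = Z i)
    (hindep : iIndepFun W μ)
    (hX : ∀ i, μ.map (X i) = poissonMeasure (s * p i).toNNReal)
    (hY : ∀ i, μ.map (Y i) = poissonMeasure (s * q₁ i).toNNReal)
    (hZ : ∀ i, μ.map (Z i) = poissonMeasure (s * q₂ i).toNNReal)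
    (f : Ω → ℝ)
    (hf : ∀ ω, f ω = ∑ i, (((X i ω : ℝ) - (1 - α) * (Y i ω : ℝ) - α * (Z i ω : ℝ)) ^ 2
        - (X i ω : ℝ) - (1 - α) ^ 2 * (Y i ω : ℝ) - α ^ 2 * (Z i ω : ℝ))) :
    (μ[f] = s ^ 2 * ∑ i, (p i - qα i) ^ 2) ∧
    ∀ b : ℝ, max (∑ i, p i ^ 2) (∑ i, qα i ^ 2) ≤ b →
      variance f μ ≤ 8 * s ^ 3 * Real.sqrt b * Real.sqrt (∑ i, (p i - qα i) ^ 4)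
        + 8 * s ^ 2 * b := by
  classical
  set g : Fin n → Ω → ℝ := fun i ω =>
    ((X i ω : ℝ) - (1 - α) * (Y i ω : ℝ) - α * (Z i ω : ℝ)) ^ 2
      - (X i ω : ℝ) - (1 - α) ^ 2 * (Y i ω : ℝ) - α ^ 2 * (Z i ω : ℝ) with hgdef
  have hXm : ∀ i, Measurable (X i) := fun i => (hW i).1 ▸ hWmeas (0, i)
  have hYm : ∀ i, Measurable (Y i) := fun i => (hW i).2.1 ▸ hWmeas (1, i)
  have hZm : ∀ i, Measurable (Z i) := fun i => (hW i).2.2 ▸ hWmeas (2, i)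
  have hA : ∀ i, 0 ≤ s * p i := fun i => mul_nonneg hs.le (hp.1 i)
  have hB : ∀ i, 0 ≤ s * q₁ i := fun i => mul_nonneg hs.le (hq₁.1 i)
  have hC : ∀ i, 0 ≤ s * q₂ i := fun i => mul_nonneg hs.le (hq₂.1 i)
  have hqα0 : ∀ i, 0 ≤ qα i := fun i => by
    rw [hqα i]
    have := hq₁.1 i; have := hq₂.1 i
    nlinarith
  have hUV : ∀ i, IndepFun (X i) (Y i) μ := by
    intro i
    have := hindep.indepFun (i := ((0 : Fin 3), i)) (j := ((1 : Fin 3), i)) (by simp)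
    rwa [(hW i).1, (hW i).2.1] at this
  have hUVT : ∀ i, IndepFun (fun ω => (X i ω, Y i ω)) (Z i) μ := by
    intro i
    have := hindep.indepFun_prodMk hWmeas ((0 : Fin 3), i) ((1 : Fin 3), i) ((2 : Fin 3), i)
      (by simp) (by simp)
    rwa [(hW i).1, (hW i).2.1, (hW i).2.2] at this
  have hper := fun i => per_i (μ := μ) (X i) (Y i) (Z i)
    (s * p i) (s * q₁ i) (s * q₂ i) α (hA i) (hB i) (hC i)
    (hXm i) (hYm i) (hZm i) (hX i) (hY i) (hZ i) (hUV i) (hUVT i) (g i) (fun ω => rfl)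
  -- Δ and σ
  have hΔ : ∀ i, s * p i - (1 - α) * (s * q₁ i) - α * (s * q₂ i) = s * (p i - qα i) := by
    intro i; rw [hqα i]; ring
  have hfsum : f = ∑ i, g i := by
    funext ω
    rw [hf ω, Finset.sum_apply]
  -- expectation
  have hint : ∀ i, Integrable (g i) μ := fun i => (hper i).1.integrable one_le_two
  have hEf : μ[f] = s ^ 2 * ∑ i, (p i - qα i) ^ 2 := by
    rw [hfsum]
    simp only [Finset.sum_apply]
    rw [integral_finset_sum _ (fun i _ => hint i)]
    rw [Finset.mul_sum]
    refine Finset.sum_congr rfl (fun i _ => ?_)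
    rw [(hper i).2.1, hΔ i]
    ring
  refine ⟨hEf, ?_⟩
  intro b hb
  have hpb : ∑ i, p i ^ 2 ≤ b := le_trans (le_max_left _ _) hb
  have hqb : ∑ i, qα i ^ 2 ≤ b := le_trans (le_max_right _ _) hb
  have hb0 : 0 ≤ b := le_trans (Finset.sum_nonneg fun i _ => sq_nonneg _) hpb
  -- pairwise independence of the g i
  have hpair : ∀ i j : Fin n, i ≠ j → IndepFun (g i) (g j) μ := by
    intro i j hij
    set S : Fin n → Finset (Fin 3 × Fin n) :=
      fun i => {((0 : Fin 3), i), ((1 : Fin 3), i), ((2 : Fin 3), i)} with hS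
    have hdisj : Disjoint (S i) (S j) := by
      rw [Finset.disjoint_left]
      intro a ha haj
      simp only [hS, Finset.mem_insert, Finset.mem_singleton] at ha haj
      rcases ha with h | h | h <;> rcases haj with h' | h' | h' <;>
        · rw [h] at h'; exact hij (by simpa using (Prod.mk.injEq .. ▸ h').2)
    have base := hindep.indepFun_finset (S i) (S j) hdisj hWmeas
    have hmem0 : ∀ k : Fin n, ((0 : Fin 3), k) ∈ S k := by intro k; simp [hS]
    have hmem1 : ∀ k : Fin n, ((1 : Fin 3), k) ∈ S k := by intro k; simp [hS]
    have hmem2 : ∀ k : Fin n, ((2 : Fin 3), k) ∈ S k := by intro k; simp [hS]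
    set φ : (k : Fin n) → ({x // x ∈ S k} → ℕ) → ℝ := fun k v =>
      ((v ⟨_, hmem0 k⟩ : ℝ) - (1 - α) * (v ⟨_, hmem1 k⟩ : ℝ) - α * (v ⟨_, hmem2 k⟩ : ℝ)) ^ 2
        - (v ⟨_, hmem0 k⟩ : ℝ) - (1 - α) ^ 2 * (v ⟨_, hmem1 k⟩ : ℝ)
        - α ^ 2 * (v ⟨_, hmem2 k⟩ : ℝ) with hφ
    have hφm : ∀ k, Measurable (φ k) := by
      intro k
      have hcoord : ∀ m : {x // x ∈ S k},
          Measurable (fun v : ({x // x ∈ S k} → ℕ) => (v m : ℝ)) :=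
        fun m => measurable_from_nat.comp (measurable_pi_apply m)
      exact (((((hcoord _).sub ((hcoord _).const_mul _)).sub
        ((hcoord _).const_mul _)).pow_const 2).sub (hcoord _)).sub
        (((hcoord _).const_mul _)) |>.sub ((hcoord _).const_mul _)
    have hcomp : ∀ k : Fin n, g k = (φ k) ∘ (fun a (m : {x // x ∈ S k}) => W m.1 a) := by
      intro k
      funext ω
      show g k ω = φ k (fun m => W m ω)
      simp only [hφ, hgdef]
      rw [(hW k).1, (hW k).2.1, (hW k).2.2]
    rw [hcomp i, hcomp j]
    exact base.comp (hφm i) (hφm j)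
  have hvar : variance f μ = ∑ i, variance (g i) μ := by
    rw [hfsum]
    exact IndepFun.variance_sum (fun i _ => (hper i).1)
      (fun i _ j _ hij => hpair i j hij)
  set Δ2 : Fin n → ℝ := fun i => (p i - qα i) ^ 2 with hΔ2
  set L : ℝ := ∑ i, (p i - qα i) ^ 2 * (p i + qα i) with hL
  set M : ℝ := ∑ i, (p i + qα i) ^ 2 with hM
  set P4 : ℝ := ∑ i, (p i - qα i) ^ 4 with hP4
  have hterm : ∀ i : Fin n, variance (g i) μ
      ≤ 4 * s ^ 3 * ((p i - qα i) ^ 2 * (p i + qα i)) + 2 * s ^ 2 * (p i + qα i) ^ 2 := by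
    intro i
    rw [(hper i).2.2, hΔ i]
    have hσ : s * p i + (1 - α) ^ 2 * (s * q₁ i) + α ^ 2 * (s * q₂ i)
        ≤ s * (p i + qα i) := by
      have t1 : (1 - α) ^ 2 * (s * q₁ i) ≤ (1 - α) * (s * q₁ i) :=
        mul_le_mul_of_nonneg_right (by nlinarith) (hB i)
      have t2 : α ^ 2 * (s * q₂ i) ≤ α * (s * q₂ i) :=
        mul_le_mul_of_nonneg_right (by nlinarith) (hC i)
      rw [hqα i]
      nlinarith [t1, t2]
    have hσ0 : 0 ≤ s * p i + (1 - α) ^ 2 * (s * q₁ i) + α ^ 2 * (s * q₂ i) :=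
      add_nonneg (add_nonneg (hA i) (mul_nonneg (sq_nonneg _) (hB i)))
        (mul_nonneg (sq_nonneg _) (hC i))
    have h1 : 4 * (s * (p i - qα i)) ^ 2 * (s * p i + (1 - α) ^ 2 * (s * q₁ i) + α ^ 2 * (s * q₂ i))
        ≤ 4 * (s * (p i - qα i)) ^ 2 * (s * (p i + qα i)) :=
      mul_le_mul_of_nonneg_left hσ (by positivity)
    have h2 : (s * p i + (1 - α) ^ 2 * (s * q₁ i) + α ^ 2 * (s * q₂ i)) ^ 2
        ≤ (s * (p i + qα i)) ^ 2 := pow_le_pow_left₀ hσ0 hσ 2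
    nlinarith [h1, h2]
  have hsum : variance f μ ≤ 4 * s ^ 3 * L + 2 * s ^ 2 * M := by
    rw [hvar, hL, hM, Finset.mul_sum, Finset.mul_sum, ← Finset.sum_add_distrib]
    exact Finset.sum_le_sum (fun i _ => hterm i)
  have hL0 : 0 ≤ L :=
    Finset.sum_nonneg (fun i _ => mul_nonneg (sq_nonneg _) (add_nonneg (hp.1 i) (hqα0 i)))
  have hP40 : 0 ≤ P4 := Finset.sum_nonneg (fun i _ => by positivity)
  have hM0 : 0 ≤ M := Finset.sum_nonneg (fun i _ => sq_nonneg _)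
  have hCS : L ≤ Real.sqrt P4 * Real.sqrt M := by
    have h2 := Finset.sum_mul_sq_le_sq_mul_sq Finset.univ
      (fun i => (p i - qα i) ^ 2) (fun i => p i + qα i)
    have h3 : L ^ 2 ≤ P4 * M := by
      refine le_trans (le_of_eq ?_) (le_trans h2 (le_of_eq ?_))
      · rw [hL]
      · rw [hP4, hM]
        congr 1
        exact Finset.sum_congr rfl (fun i _ => by ring)
    calc L = Real.sqrt (L ^ 2) := (Real.sqrt_sq hL0).symm
      _ ≤ Real.sqrt (P4 * M) := Real.sqrt_le_sqrt h3
      _ = Real.sqrt P4 * Real.sqrt M := Real.sqrt_mul hP40 _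
  have hsum2 : M ≤ 4 * b := by
    have h1 : ∀ i : Fin n, (p i + qα i) ^ 2 ≤ 2 * p i ^ 2 + 2 * qα i ^ 2 :=
      fun i => by nlinarith [sq_nonneg (p i - qα i)]
    have h2 : M ≤ ∑ i, (2 * p i ^ 2 + 2 * qα i ^ 2) := Finset.sum_le_sum (fun i _ => h1 i)
    rw [Finset.sum_add_distrib, ← Finset.mul_sum, ← Finset.mul_sum] at h2
    linarith
  have hsqrt2 : Real.sqrt M ≤ 2 * Real.sqrt b := by
    calc Real.sqrt M ≤ Real.sqrt (4 * b) := Real.sqrt_le_sqrt hsum2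
      _ = 2 * Real.sqrt b := by
        rw [show (4 : ℝ) * b = 2 ^ 2 * b by ring, Real.sqrt_mul (by positivity) b,
          Real.sqrt_sq (by norm_num)]
  have e1 : 4 * s ^ 3 * L ≤ 4 * s ^ 3 * (Real.sqrt P4 * Real.sqrt M) :=
    mul_le_mul_of_nonneg_left hCS (by positivity)
  have e2 : Real.sqrt P4 * Real.sqrt M ≤ Real.sqrt P4 * (2 * Real.sqrt b) :=
    mul_le_mul_of_nonneg_left hsqrt2 (Real.sqrt_nonneg _)
  have e3 : 4 * s ^ 3 * (Real.sqrt P4 * Real.sqrt M)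
      ≤ 4 * s ^ 3 * (Real.sqrt P4 * (2 * Real.sqrt b)) :=
    mul_le_mul_of_nonneg_left e2 (by positivity)
  have e4 : 2 * s ^ 2 * M ≤ 2 * s ^ 2 * (4 * b) :=
    mul_le_mul_of_nonneg_left hsum2 (by positivity)
  have : 4 * s ^ 3 * (Real.sqrt P4 * (2 * Real.sqrt b))
      = 8 * s ^ 3 * Real.sqrt b * Real.sqrt P4 := by ring
  linarith
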